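/- arXiv:2506.18861 — 3 statements merged into one kernel-verified Lean document; each statement's English description precedes it below -/
import Mathlib

section
/- Let G be a Hausdorff topological group, L ≤ G a compact normal subgroup, and Γ ⊆ G a subset. Then every element of Γ is elliptic if and only if every element of the set L·Γ = {l·g : l ∈ L, g ∈ Γ} is elliptic. -/
open scoped Pointwise

/-- An element of a topological group is *elliptic* if the closure of the
subgroup it generates is compact. -/
def IsElliptic {G : Type*} [Group G] [TopologicalSpace G] (g : G) : Prop :=
  IsCompact (closure (Subgroup.zpowers g : Set G))

lemma isElliptic_mul_of_mem {G : Type*} [Group G]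
    [TopologicalSpace G] [IsTopologicalGroup G] [T2Space G] {L : Subgroup G} [L.Normal]
    (hL : IsCompact (L : Set G)) {l g : G} (hl : l ∈ L) (hg : IsElliptic g) :
    IsElliptic (l * g) := by
  have hK : IsCompact ((L : Set G) * closure (Subgroup.zpowers g : Set G)) :=
    hL.mul hg
  have hsub : (Subgroup.zpowers (l * g) : Set G) ⊆
      (L : Set G) * closure (Subgroup.zpowers g : Set G) := by
    rintro _ ⟨n, rfl⟩
    have hmk : ((g ^ n : G) : G ⧸ L) = (((l * g) ^ n : G) : G ⧸ L) := by
      have h1 : ((l * g : G) : G ⧸ L) = (g : G ⧸ L) := by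
        rw [QuotientGroup.mk_mul, (QuotientGroup.eq_one_iff l).2 hl, one_mul]
      rw [QuotientGroup.mk_zpow, QuotientGroup.mk_zpow, h1]
    have hmem : (g ^ n)⁻¹ * (l * g) ^ n ∈ L := (QuotientGroup.eq).1 hmk
    refine ⟨g ^ n * ((g ^ n)⁻¹ * (l * g) ^ n) * (g ^ n)⁻¹,
      ‹L.Normal›.conj_mem _ hmem _, g ^ n,
      subset_closure (Subgroup.zpow_mem_zpowers g n), by group⟩
  exact hK.of_isClosed_subset isClosed_closure (closure_minimal hsub hK.isClosed)

/-- For a Hausdorff topological group `G`, a compact normal subgroup `L` and a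
subset `Γ ⊆ G`: every element of `Γ` is elliptic iff every element of
`L·Γ = {l * g : l ∈ L, g ∈ Γ}` is elliptic. -/
theorem pointwiseElliptic_iff_mul_pointwiseElliptic {G : Type*} [Group G]
    [TopologicalSpace G] [IsTopologicalGroup G] [T2Space G] (L : Subgroup G) [L.Normal]
    (hL : IsCompact (L : Set G)) (Γ : Set G) :
    (∀ g ∈ Γ, IsElliptic g) ↔ ∀ x ∈ (L : Set G) * Γ, IsElliptic x := by
  constructor
  · rintro h _ ⟨l, hl, g, hg, rfl⟩
    exact isElliptic_mul_of_mem hL hl (h g hg)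
  · intro h g hg
    have : g ∈ (L : Set G) * Γ := ⟨1, L.one_mem, g, hg, one_mul g⟩
    exact h g this
end

section
/- Let K be a compact topological group acting continuously by automorphisms on a finite-dimensional real vector space V, and suppose some element s ∈ K acts on V with no nonzero fixed vector. Then every element of V ⋊ K whose K-component is s is elliptic, i.e. generates a relatively compact subgroup of V ⋊ K. -/
/-- The semidirect product `V ⋊ K` of a real vector space `V` by a group `K`
acting linearly via a representation `ρ`, with multiplication
`(v, k)(w, l) = (v + ρ k w, k l)`. -/
@[ext] structure SDP {V K : Type*} [AddCommGroup V] [Module ℝ V] [Group K]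
    (ρ : Representation ℝ K V) where
  fst : V
  snd : K

namespace SDP

variable {V K : Type*} [AddCommGroup V] [Module ℝ V] [Group K]
  {ρ : Representation ℝ K V}

instance : Mul (SDP ρ) := ⟨fun a b => ⟨a.fst + ρ a.snd b.fst, a.snd * b.snd⟩⟩
instance : One (SDP ρ) := ⟨⟨0, 1⟩⟩
instance : Inv (SDP ρ) := ⟨fun a => ⟨-(ρ a.snd⁻¹ a.fst), a.snd⁻¹⟩⟩

@[simp] theorem mul_fst (a b : SDP ρ) : (a * b).fst = a.fst + ρ a.snd b.fst := rfl
@[simp] theorem mul_snd (a b : SDP ρ) : (a * b).snd = a.snd * b.snd := rfl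
@[simp] theorem one_fst : (1 : SDP ρ).fst = 0 := rfl
@[simp] theorem one_snd : (1 : SDP ρ).snd = 1 := rfl
@[simp] theorem inv_fst (a : SDP ρ) : (a⁻¹).fst = -(ρ a.snd⁻¹ a.fst) := rfl
@[simp] theorem inv_snd (a : SDP ρ) : (a⁻¹).snd = a.snd⁻¹ := rfl

instance : Group (SDP ρ) where
  mul_assoc a b c := by
    ext <;> simp [map_mul, Module.End.mul_apply, add_assoc, mul_assoc]
  one_mul a := by ext <;> simp
  mul_one a := by ext <;> simp
  inv_mul_cancel a := by
    ext <;> simp [← map_mul, ← Module.End.mul_apply]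

/-- The product topology on `V ⋊ K`. -/
instance [TopologicalSpace V] [TopologicalSpace K] : TopologicalSpace (SDP ρ) :=
  TopologicalSpace.induced (fun a => (a.fst, a.snd)) inferInstance

/-- The canonical copy `{0} × K` of `K` inside `V ⋊ K`. -/
def core (ρ : Representation ℝ K V) : Subgroup (SDP ρ) where
  carrier := {a | a.fst = 0}
  mul_mem' := by intro a b ha hb; simp_all [Set.mem_setOf_eq]
  one_mem' := rfl
  inv_mem' := by intro a ha; simp_all [Set.mem_setOf_eq]

end SDP

/-- Let `K` be a compact topological group acting continuously and linearly on
a finite-dimensional real vector space `V` via `ρ`, and suppose `s ∈ K` acts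
with no nonzero fixed vector.  Then every element of `V ⋊ K` whose
`K`-component is `s` is elliptic. -/
theorem elliptic_of_no_fixed_vector {V K : Type*} [NormedAddCommGroup V]
    [NormedSpace ℝ V] [FiniteDimensional ℝ V] [Group K] [TopologicalSpace K]
    [IsTopologicalGroup K] [CompactSpace K] (ρ : Representation ℝ K V)
    (hcont : Continuous fun p : K × V => ρ p.1 p.2)
    (s : K) (hs : ∀ v : V, ρ s v = v → v = 0) :
    ∀ v : V, IsElliptic (⟨v, s⟩ : SDP ρ) := by
  intro v
  classical
  have hinj : Function.Injective ((LinearMap.id : V →ₗ[ℝ] V) - ρ s) := by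
    rw [← LinearMap.ker_eq_bot, LinearMap.ker_eq_bot']
    intro m hm
    apply hs m
    have : m - ρ s m = 0 := hm
    rw [sub_eq_zero] at this
    exact this.symm
  obtain ⟨w, hw⟩ := LinearMap.surjective_of_injective hinj v
  have hw' : w - ρ s w = v := hw
  set g : SDP ρ := ⟨v, s⟩ with hg
  let H : Subgroup (SDP ρ) :=
  { carrier := {a | a.fst = w - ρ a.snd w}
    mul_mem' := by
      intro a b ha hb
      simp only [Set.mem_setOf_eq] at *
      simp only [SDP.mul_fst, SDP.mul_snd, ha, hb, map_mul, map_sub,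
        Module.End.mul_apply]
      abel
    one_mem' := by simp [Set.mem_setOf_eq]
    inv_mem' := by
      intro a ha
      simp only [Set.mem_setOf_eq] at *
      simp only [SDP.inv_fst, SDP.inv_snd, ha, map_sub]
      have : ρ a.snd⁻¹ (ρ a.snd w) = w := by
        rw [← Module.End.mul_apply, ← map_mul, inv_mul_cancel, map_one,
          Module.End.one_apply]
      rw [this]
      abel }
  have hgH : g ∈ H := by
    show v = w - ρ s w
    exact hw'.symm
  have hle : Subgroup.zpowers g ≤ H := Subgroup.zpowers_le.mpr hgH
  let e : SDP ρ ≃ (V × K) :=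
  { toFun := fun a => (a.fst, a.snd)
    invFun := fun p => ⟨p.1, p.2⟩
    left_inv := fun a => rfl
    right_inv := fun p => rfl }
  have hind : Topology.IsInducing e := ⟨rfl⟩
  let he : SDP ρ ≃ₜ (V × K) := e.toHomeomorphOfIsInducing hind
  rw [IsElliptic, ← he.isCompact_image, he.image_closure]
  have hρw : Continuous fun k : K => ρ k w :=
    hcont.comp (continuous_id.prodMk continuous_const)
  set S : Set (V × K) := {p : V × K | p.1 = w - ρ p.2 w} with hS
  have hScompact : IsCompact S := by
    have hSeq : S = (fun k : K => (w - ρ k w, k)) '' Set.univ := by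
      ext p
      constructor
      · intro hp
        exact ⟨p.2, trivial, Prod.ext hp.symm rfl⟩
      · rintro ⟨k, -, rfl⟩
        rfl
    rw [hSeq]
    exact isCompact_univ.image ((continuous_const.sub hρw).prodMk continuous_id)
  have hSclosed : IsClosed S := by
    have hSeq : S = (fun p : V × K => p.1 - (w - ρ p.2 w)) ⁻¹' {0} := by
      ext p
      simp [hS, sub_eq_zero]
    rw [hSeq]
    exact isClosed_singleton.preimage
      (continuous_fst.sub (continuous_const.sub (hρw.comp continuous_snd)))
  refine hScompact.of_isClosed_subset isClosed_closure ?_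
  apply closure_minimal _ hSclosed
  rintro p ⟨a, ha, rfl⟩
  exact hle ha
end

section
/- Let G = ℝ^d ⋊ K with K a compact group acting linearly on ℝ^d. Every compact subgroup of G is conjugate, by an element of ℝ^d, to a subgroup of {0} × K; in particular the maximal compact subgroups of G are precisely the conjugates of {0} × K. -/
namespace SDP

variable {V K : Type*} [AddCommGroup V] [Module ℝ V] [Group K]
  {ρ : Representation ℝ K V}

theorem mem_core {a : SDP ρ} : a ∈ SDP.core ρ ↔ a.fst = 0 := Iff.rfl

variable [TopologicalSpace V] [TopologicalSpace K]

theorem isInducing_emb : Topology.IsInducing (fun a : SDP ρ => (a.fst, a.snd)) := ⟨rfl⟩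

theorem continuous_fst' : Continuous (fun a : SDP ρ => a.fst) :=
  continuous_fst.comp isInducing_emb.continuous

theorem continuous_snd' : Continuous (fun a : SDP ρ => a.snd) :=
  continuous_snd.comp isInducing_emb.continuous

theorem topologicalGroup [IsTopologicalAddGroup V] [IsTopologicalGroup K]
    (hcont : Continuous fun p : K × V => ρ p.1 p.2) : IsTopologicalGroup (SDP ρ) where
  continuous_mul := continuous_induced_rng.2 <|
     ((continuous_fst'.comp continuous_fst).add
      (hcont.comp (((continuous_snd'.comp continuous_fst)).prodMk
        (continuous_fst'.comp continuous_snd)))).prodMk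
      ((continuous_snd'.comp continuous_fst).mul (continuous_snd'.comp continuous_snd))
  continuous_inv := continuous_induced_rng.2 <|
    ((hcont.comp (continuous_snd'.inv.prodMk continuous_fst')).neg).prodMk
      continuous_snd'.inv

end SDP

/-- Let `G = ℝ^d ⋊ K` with `K` a compact group acting linearly and
continuously on the finite-dimensional real vector space `V = ℝ^d`.  Every
compact subgroup of `G` is conjugate, by an element of `V`, to a subgroup of
`{0} × K`; and `{0} × K` itself is compact, so the maximal compact subgroups
of `G` are precisely the conjugates of `{0} × K`. -/
theorem compact_subgroup_conj_into_core {V K : Type*} [NormedAddCommGroup V]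
    [NormedSpace ℝ V] [FiniteDimensional ℝ V] [Group K] [TopologicalSpace K]
    [IsTopologicalGroup K] [CompactSpace K] (ρ : Representation ℝ K V)
    (hcont : Continuous fun p : K × V => ρ p.1 p.2) :
    IsCompact ((SDP.core ρ : Subgroup (SDP ρ)) : Set (SDP ρ)) ∧
      ∀ C : Subgroup (SDP ρ), IsCompact (C : Set (SDP ρ)) →
        ∃ v : V, ∀ c ∈ C,
          ((⟨v, 1⟩ : SDP ρ) * c * (⟨v, 1⟩ : SDP ρ)⁻¹) ∈ SDP.core ρ := by
  classical
  haveI : IsTopologicalGroup (SDP ρ) := SDP.topologicalGroup hcont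
  have hind : Topology.IsInducing (fun a : SDP ρ => (a.fst, a.snd)) := SDP.isInducing_emb
  constructor
  · have himg : (fun a : SDP ρ => (a.fst, a.snd)) '' (SDP.core ρ : Set (SDP ρ)) =
        ({(0 : V)} ×ˢ (Set.univ : Set K)) := by
      ext p
      constructor
      · rintro ⟨a, ha, rfl⟩
        exact ⟨ha, trivial⟩
      · rintro ⟨hp, -⟩
        exact ⟨⟨p.1, p.2⟩, hp, rfl⟩
    rw [hind.isCompact_iff, himg]
    exact isCompact_singleton.prod isCompact_univ
  · intro C hC
    haveI : CompactSpace C := isCompact_iff_compactSpace.1 hC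
    letI : MeasurableSpace C := borel C
    haveI : BorelSpace C := ⟨rfl⟩
    haveI : Nonempty C := ⟨⟨1, C.one_mem⟩⟩
    set K₀ : TopologicalSpace.PositiveCompacts C := ⊤ with hK₀
    set μ := MeasureTheory.Measure.haarMeasure K₀ with hμ
    have hμuniv : μ Set.univ = 1 := by
      have h := MeasureTheory.Measure.haarMeasure_self (K₀ := K₀)
      rwa [TopologicalSpace.PositiveCompacts.coe_top] at h
    haveI : MeasureTheory.IsProbabilityMeasure μ := ⟨hμuniv⟩
    set f : C → V := fun c => (c : SDP ρ).fst with hf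
    have hfc : Continuous f := SDP.continuous_fst'.comp continuous_subtype_val
    have hfsupp : HasCompactSupport f :=
      IsCompact.of_isClosed_subset isCompact_univ (isClosed_tsupport f) (Set.subset_univ _)
    have hfint : MeasureTheory.Integrable f μ := hfc.integrable_of_hasCompactSupport hfsupp
    set v : V := ∫ c, f c ∂μ with hv
    have key : ∀ c : C, (c : SDP ρ).fst + ρ (c : SDP ρ).snd v = v := by
      intro c
      set L : V →L[ℝ] V := LinearMap.toContinuousLinearMap (ρ (c : SDP ρ).snd) with hL
      have h1 : (∫ x, f (c * x) ∂μ) = v := MeasureTheory.integral_mul_left_eq_self f c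
      have h2 : (fun x : C => f (c * x)) = fun x : C => (c : SDP ρ).fst + L (f x) := rfl
      rw [h2] at h1
      rw [MeasureTheory.integral_add (MeasureTheory.integrable_const _)
        (L.integrable_comp hfint), MeasureTheory.integral_const,
        L.integral_comp_comm hfint, MeasureTheory.measureReal_def, hμuniv] at h1
      simp at h1
      exact h1
    refine ⟨-v, ?_⟩
    intro c hc
    rw [SDP.mem_core]
    have : ((⟨-v, 1⟩ : SDP ρ) * c * (⟨-v, 1⟩ : SDP ρ)⁻¹).fst
        = -v + ((c.fst + ρ c.snd v)) := by
      simp [add_assoc]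
    rw [this, key ⟨c, hc⟩]
    exact neg_add_cancel v
end
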